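/- Let G be a finite simple forest, let d_1 ≥ d_2 ≥ ⋯ ≥ d_n be the degrees of the vertices of G in nonincreasing order, and let n_2 ≥ 1 be the number of vertices of G of degree at least 2. Then Δ(G) ≤ ( (∑_{i=1}^{n_2} d_i) / n_2 )^{n_2}. -/

import Mathlib

set_option linter.unusedSectionVars false
set_option maxHeartbeats 1000000

open scoped Classical

/-- The constraint matrix `M(G) = [[I, B], [Bᵀ, I]]` of the total matching IP,
with rows and columns indexed by `V(G) ⊔ E(G)`. -/
noncomputable def totalMatrix {V : Type*} (G : SimpleGraph V) :
    Matrix (V ⊕ G.edgeSet) (V ⊕ G.edgeSet) ℤ := fun a b =>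
  match a, b with
  | Sum.inl v, Sum.inl w => if v = w then 1 else 0
  | Sum.inl v, Sum.inr e => if v ∈ (e : Sym2 V) then 1 else 0
  | Sum.inr e, Sum.inl v => if v ∈ (e : Sym2 V) then 1 else 0
  | Sum.inr e, Sum.inr f => if e = f then 1 else 0

/-- `Δ(G)`: the maximum absolute value of the determinant of a square submatrix of `M(G)`
(the empty submatrix, of determinant `1`, is allowed). -/
noncomputable def maxSubdet {V : Type*} (G : SimpleGraph V) : ℕ :=
  sSup {d : ℕ | ∃ (k : ℕ) (f g : Fin k → (V ⊕ G.edgeSet)),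
    Function.Injective f ∧ Function.Injective g ∧
    d = ((totalMatrix G).submatrix f g).det.natAbs}

namespace Stmt16Aux

open Matrix Function Set


section Generic

variable {ι : Type} [Fintype ι] [DecidableEq ι]

lemma range_comp_val {α : Type*} {f : ι → α} (hf : Injective f) (i₀ : ι) :
    Set.range (fun x : {i : ι // i ≠ i₀} => f ↑x) = Set.range f \ {f i₀} := by
  ext a
  constructor
  · rintro ⟨⟨i, hi⟩, rfl⟩
    exact ⟨⟨i, rfl⟩, by simpa [hf.eq_iff] using hi⟩
  · rintro ⟨⟨i, rfl⟩, ha⟩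
    have : i ≠ i₀ := by
      intro h; exact ha (by simp [h])
    exact ⟨⟨i, this⟩, rfl⟩

lemma range_comp_swap {α : Type*} {g : ι → α} (hg : Injective g) (i₀ j₀ : ι) :
    Set.range (fun x : {i : ι // i ≠ i₀} => g (Equiv.swap i₀ j₀ ↑x)) =
      Set.range g \ {g j₀} := by
  ext a
  constructor
  · rintro ⟨⟨i, hi⟩, rfl⟩
    refine ⟨⟨_, rfl⟩, ?_⟩
    have : Equiv.swap i₀ j₀ i ≠ j₀ := by
      intro h
      apply hi
      have := (Equiv.swap i₀ j₀).injective (a₂ := i₀) (by simpa using h)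
      exact this
    simpa [hg.eq_iff] using this
  · rintro ⟨⟨j, rfl⟩, ha⟩
    have hj : j ≠ j₀ := by intro h; exact ha (by simp [h])
    refine ⟨⟨Equiv.swap i₀ j₀ j, ?_⟩, ?_⟩
    · intro h
      apply hj
      have := (Equiv.swap i₀ j₀).injective (a₂ := j₀) (by simpa using h)
      exact this
    · simp

/-- Pivot on a column having a single (potentially) nonzero entry. -/
lemma abs_det_pivot_col (N : Matrix ι ι ℤ) (i₀ j₀ : ι)
    (h : ∀ i, i ≠ i₀ → N i j₀ = 0) :
    |N.det| = |N i₀ j₀| * |(N.submatrix (fun x : {i : ι // i ≠ i₀} => (x : ι))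
      (fun x : {i : ι // i ≠ i₀} => Equiv.swap i₀ j₀ (x : ι))).det| := by
  set σ := Equiv.swap i₀ j₀ with hσ
  have h1 : |(N.submatrix id ⇑σ).det| = |N.det| := by
    rw [det_permute']
    rcases Int.units_eq_one_or (Equiv.Perm.sign σ) with h' | h' <;> simp [h', abs_mul]
  rw [← h1]
  set N' := N.submatrix id ⇑σ with hN'
  haveI : Unique {i : ι // i = i₀} := ⟨⟨⟨i₀, rfl⟩⟩, by rintro ⟨x, rfl⟩; rfl⟩
  set e : {i : ι // i = i₀} ⊕ {i : ι // ¬ i = i₀} ≃ ι := Equiv.sumCompl (fun i => i = i₀) with he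
  have h2 : (N'.submatrix ⇑e ⇑e).det = N'.det := det_submatrix_equiv_self e N'
  have h3 : N'.submatrix ⇑e ⇑e = Matrix.fromBlocks
      (Matrix.of fun _ _ : {i : ι // i = i₀} => N i₀ j₀)
      (Matrix.of fun (_ : {i : ι // i = i₀}) (y : {i : ι // ¬ i = i₀}) => N i₀ (σ ↑y))
      0
      (Matrix.of fun (x : {i : ι // ¬ i = i₀}) (y : {i : ι // ¬ i = i₀}) => N ↑x (σ ↑y)) := by
    ext a b
    rcases a with ⟨x, hx⟩ | ⟨x, hx⟩ <;> rcases b with ⟨y, hy⟩ | ⟨y, hy⟩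
    · subst hx; subst hy; simp [N', e, hσ, Equiv.swap_apply_left]
    · subst hx; simp [N', e]
    · subst hy
      have hx0 := h x hx
      simp [N', e, hσ, Equiv.swap_apply_left, hx0]
    · simp [N', e]
  have h4 : N'.det = N i₀ j₀ *
      (N.submatrix (fun x : {i : ι // i ≠ i₀} => (x : ι))
        (fun x : {i : ι // i ≠ i₀} => σ (x : ι))).det := by
    rw [← h2, h3, Matrix.det_fromBlocks_zero₂₁, Matrix.det_unique]
    rfl
  rw [h4, abs_mul]

end Generic

section Generic2

variable {ι : Type} [Fintype ι] [DecidableEq ι]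

lemma det_updateCol_finset_sum {κ : Type*} (M : Matrix ι ι ℤ) (j : ι) (s : Finset κ)
    (c : κ → ι → ℤ) :
    (M.updateCol j (fun i => ∑ k ∈ s, c k i)).det
      = ∑ k ∈ s, (M.updateCol j (c k)).det := by
  induction s using Finset.induction with
  | empty =>
      simp only [Finset.sum_empty]
      apply Matrix.det_eq_zero_of_column_eq_zero j
      intro i
      simp [Matrix.updateCol_apply]
  | insert a s' hk ih =>
      rw [Finset.sum_insert hk]
      have : (fun i => ∑ k ∈ insert a s', c k i)
          = (fun i => c a i + ∑ k ∈ s', c k i) := by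
        funext i; rw [Finset.sum_insert hk]
      rw [this]
      have := Matrix.det_updateCol_add M j (c a) (fun i => ∑ k ∈ s', c k i)
      rw [show ((c a) + fun i => ∑ k ∈ s', c k i) = (fun i => c a i + ∑ k ∈ s', c k i) from rfl]
        at this
      rw [this, ih]

variable {α : Type*} [DecidableEq α]

lemma delete_col (M : Matrix α α ℤ) {f g : ι → α} (hf : Injective f) (hg : Injective g)
    (i₀ j₀ : ι) (h : ∀ i, i ≠ i₀ → M (f i) (g j₀) = 0) :
    ∃ (ι' : Type) (_ : Fintype ι') (_ : DecidableEq ι') (f' g' : ι' → α),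
      Injective f' ∧ Injective g' ∧
      Set.range f' = Set.range f \ {f i₀} ∧ Set.range g' = Set.range g \ {g j₀} ∧
      |(M.submatrix f g).det| = |M (f i₀) (g j₀)| * |(M.submatrix f' g').det| := by
  classical
  refine ⟨{i : ι // i ≠ i₀}, inferInstance, inferInstance,
    (fun x => f ↑x), (fun x => g (Equiv.swap i₀ j₀ ↑x)), ?_, ?_, ?_, ?_, ?_⟩
  · exact hf.comp Subtype.val_injective
  · exact hg.comp ((Equiv.swap i₀ j₀).injective.comp Subtype.val_injective)
  · exact range_comp_val hf i₀
  · exact range_comp_swap hg i₀ j₀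
  · have := abs_det_pivot_col (M.submatrix f g) i₀ j₀ (fun i hi => h i hi)
    simpa [Matrix.submatrix_submatrix, Function.comp_def] using this

lemma abs_det_submatrix_swap (M : Matrix α α ℤ) {f g : ι → α} :
    |(M.submatrix f g).det| = |(Mᵀ.submatrix g f).det| := by
  rw [← Matrix.det_transpose (Mᵀ.submatrix g f), ← Matrix.transpose_submatrix]
  simp

lemma delete_row (M : Matrix α α ℤ) {f g : ι → α} (hf : Injective f) (hg : Injective g)
    (i₀ j₀ : ι) (h : ∀ j, j ≠ j₀ → M (f i₀) (g j) = 0) :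
    ∃ (ι' : Type) (_ : Fintype ι') (_ : DecidableEq ι') (f' g' : ι' → α),
      Injective f' ∧ Injective g' ∧
      Set.range f' = Set.range f \ {f i₀} ∧ Set.range g' = Set.range g \ {g j₀} ∧
      |(M.submatrix f g).det| = |M (f i₀) (g j₀)| * |(M.submatrix f' g').det| := by
  obtain ⟨ι', hFin, hDec, g', f', hg', hf', hrg, hrf, hdet⟩ :=
    delete_col Mᵀ hg hf j₀ i₀ (fun j hj => h j hj)
  refine ⟨ι', hFin, hDec, f', g', hf', hg', hrf, hrg, ?_⟩
  rw [abs_det_submatrix_swap M (f := f) (g := g), hdet,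
    abs_det_submatrix_swap M (f := f') (g := g')]
  rfl

lemma subtract_delete_col (M : Matrix α α ℤ) {f g : ι → α} (hf : Injective f) (hg : Injective g)
    (i₀ j₀ j₁ : ι) (hjj : j₀ ≠ j₁)
    (h : ∀ i, i ≠ i₀ → M (f i) (g j₀) = M (f i) (g j₁)) :
    ∃ (ι' : Type) (_ : Fintype ι') (_ : DecidableEq ι') (f' g' : ι' → α),
      Injective f' ∧ Injective g' ∧
      Set.range f' = Set.range f \ {f i₀} ∧ Set.range g' = Set.range g \ {g j₀} ∧
      |(M.submatrix f g).det| =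
        |M (f i₀) (g j₀) - M (f i₀) (g j₁)| * |(M.submatrix f' g').det| := by
  classical
  set N := M.submatrix f g with hN
  set B := N.updateCol j₀ (fun k => N k j₀ + (-1 : ℤ) • N k j₁) with hB
  have hdetB : B.det = N.det := Matrix.det_updateCol_add_smul_self N hjj (-1)
  have hBcol : ∀ i, i ≠ i₀ → B i j₀ = 0 := by
    intro i hi
    rw [hB, Matrix.updateCol_self]
    have := h i hi
    simp [hN, this]
  have hpivot := abs_det_pivot_col B i₀ j₀ hBcol
  have hBentry : B i₀ j₀ = M (f i₀) (g j₀) - M (f i₀) (g j₁) := by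
    rw [hB, Matrix.updateCol_self]; simp [hN]; ring
  have hminor : B.submatrix (fun x : {i : ι // i ≠ i₀} => (x : ι))
      (fun x : {i : ι // i ≠ i₀} => Equiv.swap i₀ j₀ (x : ι))
      = M.submatrix (fun x : {i : ι // i ≠ i₀} => f ↑x)
        (fun x : {i : ι // i ≠ i₀} => g (Equiv.swap i₀ j₀ ↑x)) := by
    ext x y
    have hy : Equiv.swap i₀ j₀ (y : ι) ≠ j₀ := by
      intro hy
      exact y.2 ((Equiv.swap i₀ j₀).injective (by simpa using hy))
    simp [hB, hN, Matrix.updateCol_ne hy]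
  refine ⟨{i : ι // i ≠ i₀}, inferInstance, inferInstance,
    (fun x => f ↑x), (fun x => g (Equiv.swap i₀ j₀ ↑x)),
    hf.comp Subtype.val_injective,
    hg.comp ((Equiv.swap i₀ j₀).injective.comp Subtype.val_injective),
    range_comp_val hf i₀, range_comp_swap hg i₀ j₀, ?_⟩
  rw [← hdetB, hpivot, hBentry, hminor]

lemma abs_det_submatrix_one_le {f g : ι → α} (hf : Injective f) (hg : Injective g) :
    |((1 : Matrix α α ℤ).submatrix f g).det| ≤ 1 := by
  classical
  by_cases hr : ∀ j, ∃ i, f i = g j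
  · choose e he using hr
    have heinj : Injective e := by
      intro j j' hjj'
      apply hg
      rw [← he j, ← he j', hjj']
    have hebij : Bijective e := (Finite.injective_iff_bijective).mp heinj
    set e' : ι ≃ ι := Equiv.ofBijective e hebij with he'
    have hgeq : g = f ∘ e' := by
      funext j
      rw [Function.comp_apply, he', Equiv.ofBijective_apply, he]
    have h1 : (1 : Matrix α α ℤ).submatrix f f = 1 := by
      ext i j
      simp [Matrix.one_apply, hf.eq_iff]
    have : (1 : Matrix α α ℤ).submatrix f g
        = ((1 : Matrix α α ℤ).submatrix f f).submatrix id ⇑e' := by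
      rw [Matrix.submatrix_submatrix, hgeq]
      rfl
    rw [this, h1, Matrix.det_permute']
    rcases Int.units_eq_one_or (Equiv.Perm.sign e') with h' | h' <;> simp [h']
  · push_neg at hr
    obtain ⟨j, hj⟩ := hr
    rw [Matrix.det_eq_zero_of_column_eq_zero j]
    · simp
    · intro i
      simp [Matrix.one_apply, hj i]

end Generic2



noncomputable def NS {V : Type*} (G : SimpleGraph V) (S : Finset G.edgeSet) :
    Matrix (V ⊕ G.edgeSet) (V ⊕ G.edgeSet) ℤ := fun a b =>
  match a, b with
  | Sum.inl v, Sum.inl v' => if v = v' then 1 else 0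
  | Sum.inl v, Sum.inr e => if e ∈ S ∧ v ∈ (e : Sym2 V) then 1 else 0
  | Sum.inr e, Sum.inl v => if e ∈ S ∧ v ∈ (e : Sym2 V) then 1 else 0
  | Sum.inr e, Sum.inr e' => if e = e' then 1 else 0

noncomputable def degS {V : Type*} (G : SimpleGraph V) (S : Finset G.edgeSet) (v : V) : ℕ :=
  (S.filter (fun e : G.edgeSet => v ∈ (e : Sym2 V))).card

noncomputable def PB {V : Type*} [Fintype V] (G : SimpleGraph V) (S : Finset G.edgeSet)
    (A : Set (V ⊕ G.edgeSet)) : ℕ :=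
  ∏ v ∈ Finset.univ.filter (fun v => 2 ≤ degS G S v ∧ Sum.inl v ∈ A), degS G S v

section GraphLemmas

variable {V : Type*} {G : SimpleGraph V} {S : Finset G.edgeSet} {e₀ : G.edgeSet} {u w : V}

lemma NS_symm (a b : V ⊕ G.edgeSet) : NS G S a b = NS G S b a := by
  rcases a with v | e <;> rcases b with v' | e' <;> simp [NS, eq_comm, and_comm]

lemma NS_transpose : (NS G S)ᵀ = NS G S := by
  ext a b; exact NS_symm b a

lemma col_u (hS : e₀ ∈ S) (hme : ∀ x, x ∈ (e₀ : Sym2 V) ↔ x = u ∨ x = w)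
    (hleaf : ∀ e ∈ S, u ∈ (e : Sym2 V) → e = e₀) (b : V ⊕ G.edgeSet) :
    NS G S b (Sum.inl u) = if b = Sum.inl u ∨ b = Sum.inr e₀ then 1 else 0 := by
  rcases b with v | e
  · simp [NS]
  · simp only [NS]
    have : (e ∈ S ∧ u ∈ (e : Sym2 V)) ↔ e = e₀ := by
      constructor
      · rintro ⟨h1, h2⟩; exact hleaf e h1 h2
      · rintro rfl; exact ⟨hS, (hme u).2 (Or.inl rfl)⟩
    simp [this]

lemma col_e (hS : e₀ ∈ S) (hme : ∀ x, x ∈ (e₀ : Sym2 V) ↔ x = u ∨ x = w)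
    (b : V ⊕ G.edgeSet) :
    NS G S b (Sum.inr e₀) =
      if b = Sum.inr e₀ ∨ b = Sum.inl u ∨ b = Sum.inl w then 1 else 0 := by
  rcases b with v | e
  · simp [NS, hS, hme]
  · simp [NS]

lemma col_w (b : V ⊕ G.edgeSet) :
    NS G S b (Sum.inl w) = (if b = Sum.inl w then 1 else 0) +
      ∑ e' ∈ S.filter (fun e' : G.edgeSet => w ∈ (e' : Sym2 V)), (if b = Sum.inr e' then (1:ℤ) else 0) := by
  rcases b with v | e
  · rw [Finset.sum_eq_zero (fun e' _ => by simp)]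
    simp [NS]
  · simp only [NS]
    simp only [Sum.inr.injEq, reduceCtorEq, if_false, zero_add]
    rw [Finset.sum_ite_eq (S.filter (fun e' : G.edgeSet => w ∈ (e' : Sym2 V))) e (fun _ => (1:ℤ))]
    simp [Finset.mem_filter, and_comm]

lemma NS_empty : NS G (∅ : Finset G.edgeSet) = 1 := by
  ext a b
  rcases a with v | e <;> rcases b with v' | e' <;>
    simp [NS, Matrix.one_apply]

lemma NS_erase_eq (a b : V ⊕ G.edgeSet) (ha : a ≠ Sum.inr e₀) (hb : b ≠ Sum.inr e₀) :
    NS G S a b = NS G (S.erase e₀) a b := by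
  rcases a with v | e <;> rcases b with v' | e'
  · simp [NS]
  · have he' : e' ≠ e₀ := fun h => hb (by rw [h])
    simp [NS, Finset.mem_erase, he']
  · have he : e ≠ e₀ := fun h => ha (by rw [h])
    simp [NS, Finset.mem_erase, he]
  · simp [NS]

lemma degS_mono {S' : Finset G.edgeSet} (h : S' ⊆ S) (v : V) : degS G S' v ≤ degS G S v :=
  Finset.card_le_card (Finset.filter_subset_filter _ h)

lemma degS_erase (hS : e₀ ∈ S) (hw : w ∈ (e₀ : Sym2 V)) :
    degS G (S.erase e₀) w = degS G S w - 1 := by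
  unfold degS
  rw [Finset.filter_erase, Finset.card_erase_of_mem (by simp [Finset.mem_filter, hS, hw])]

lemma one_le_degS (hS : e₀ ∈ S) (hw : w ∈ (e₀ : Sym2 V)) : 1 ≤ degS G S w := by
  unfold degS
  rw [Nat.one_le_iff_ne_zero, ← Nat.pos_iff_ne_zero, Finset.card_pos]
  exact ⟨e₀, by simp [Finset.mem_filter, hS, hw]⟩

end GraphLemmas

section PBLemmas

variable {V : Type*} [Fintype V] {G : SimpleGraph V}

lemma PB_mono {S' S : Finset G.edgeSet} {A' A : Set (V ⊕ G.edgeSet)}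
    (hS : S' ⊆ S) (hA : A' ⊆ A) : PB G S' A' ≤ PB G S A := by
  unfold PB
  calc ∏ v ∈ Finset.univ.filter (fun v => 2 ≤ degS G S' v ∧ Sum.inl v ∈ A'), degS G S' v
      ≤ ∏ v ∈ Finset.univ.filter (fun v => 2 ≤ degS G S' v ∧ Sum.inl v ∈ A'), degS G S v :=
        Finset.prod_le_prod' (fun v _ => degS_mono hS v)
    _ ≤ ∏ v ∈ Finset.univ.filter (fun v => 2 ≤ degS G S v ∧ Sum.inl v ∈ A), degS G S v := by
        apply Finset.prod_le_prod_of_subset_of_one_le'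
        · intro v hv
          rw [Finset.mem_filter] at hv ⊢
          exact ⟨hv.1, le_trans hv.2.1 (degS_mono hS v), hA hv.2.2⟩
        · intro v hv _
          have := (Finset.mem_filter.mp hv).2.1
          omega

lemma PB_empty (A : Set (V ⊕ G.edgeSet)) : PB G (∅ : Finset G.edgeSet) A = 1 := by
  unfold PB
  rw [Finset.prod_eq_one]
  intro v hv
  have := (Finset.mem_filter.mp hv).2.1
  simp [degS] at this

/-- The key arithmetic inequality for the hard case. -/
lemma PB_hard {S : Finset G.edgeSet} {e₀ : G.edgeSet} {w : V}
    (hS : e₀ ∈ S) (hw : w ∈ (e₀ : Sym2 V))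
    {A' A : Set (V ⊕ G.edgeSet)} (hA : A' ⊆ A) (hwA' : Sum.inl w ∉ A') (hwA : Sum.inl w ∈ A) :
    ((S.filter (fun e' : G.edgeSet => w ∈ (e' : Sym2 V))).erase e₀).card * PB G (S.erase e₀) A'
      ≤ PB G S A := by
  have hmem : e₀ ∈ S.filter (fun e' : G.edgeSet => w ∈ (e' : Sym2 V)) :=
    Finset.mem_filter.mpr ⟨hS, hw⟩
  have hcard : ((S.filter (fun e' : G.edgeSet => w ∈ (e' : Sym2 V))).erase e₀).card
      = degS G S w - 1 := by
    rw [Finset.card_erase_of_mem hmem]; rfl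
  rw [hcard]
  by_cases hd : 2 ≤ degS G S w
  · have hwF : w ∈ Finset.univ.filter (fun v => 2 ≤ degS G S v ∧ Sum.inl v ∈ A) := by
      simp [hd, hwA]
    have hPBA : PB G S A = degS G S w *
        ∏ v ∈ (Finset.univ.filter (fun v => 2 ≤ degS G S v ∧ Sum.inl v ∈ A)).erase w,
          degS G S v := (Finset.mul_prod_erase _ _ hwF).symm
    have hQ : PB G (S.erase e₀) A' ≤
        ∏ v ∈ (Finset.univ.filter (fun v => 2 ≤ degS G S v ∧ Sum.inl v ∈ A)).erase w,
          degS G S v := by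
      unfold PB
      calc ∏ v ∈ Finset.univ.filter (fun v => 2 ≤ degS G (S.erase e₀) v ∧ Sum.inl v ∈ A'),
            degS G (S.erase e₀) v
          ≤ ∏ v ∈ Finset.univ.filter (fun v => 2 ≤ degS G (S.erase e₀) v ∧ Sum.inl v ∈ A'),
            degS G S v := Finset.prod_le_prod' (fun v _ => degS_mono (Finset.erase_subset _ _) v)
        _ ≤ _ := by
          apply Finset.prod_le_prod_of_subset_of_one_le'
          · intro v hv
            rw [Finset.mem_filter] at hv
            rw [Finset.mem_erase, Finset.mem_filter]
            refine ⟨?_, hv.1, le_trans hv.2.1 (degS_mono (Finset.erase_subset _ _) v),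
              hA hv.2.2⟩
            intro hvw
            exact hwA' (hvw ▸ hv.2.2)
          · intro v hv _
            have := (Finset.mem_erase.mp hv)
            have := (Finset.mem_filter.mp this.2).2.1
            omega
    rw [hPBA]
    exact Nat.mul_le_mul (Nat.sub_le _ _) hQ
  · have : degS G S w - 1 = 0 := by omega
    rw [this, Nat.zero_mul]
    exact Nat.zero_le _

end PBLemmas

section Leaf


lemma exists_unique_nbr {V : Type*} [Fintype V] (H : SimpleGraph V) (hac : H.IsAcyclic)
    {x y : V} (hxy : H.Adj x y) :
    ∃ u w : V, H.Adj u w ∧ ∀ z, H.Adj u z → z = w := by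
  classical
  set L : Set ℕ := {n | ∃ (u v : V) (p : H.Walk u v), p.IsPath ∧ p.length = n} with hL
  have hbdd : BddAbove L := by
    refine ⟨Fintype.card V, ?_⟩
    rintro n ⟨u, v, p, hp, rfl⟩
    exact le_of_lt hp.length_lt
  have hne : L.Nonempty := by
    refine ⟨1, x, y, SimpleGraph.Walk.cons hxy SimpleGraph.Walk.nil, ?_, rfl⟩
    simp [SimpleGraph.Walk.cons_isPath_iff, hxy.ne]
  obtain ⟨u, v, p, hp, hlen⟩ := Nat.sSup_mem hne hbdd
  have h1 : 1 ≤ sSup L := le_csSup hbdd (by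
    exact ⟨x, y, SimpleGraph.Walk.cons hxy SimpleGraph.Walk.nil, by
      simp [SimpleGraph.Walk.cons_isPath_iff, hxy.ne], rfl⟩)
  -- p is nonempty, so p = cons h q
  cases p with
  | nil => simp at hlen; omega
  | cons h q =>
      rename_i w₀
      rw [SimpleGraph.Walk.cons_isPath_iff] at hp
      refine ⟨u, w₀, h, ?_⟩
      intro z hz
      by_contra hzw
      by_cases hzs : z ∈ (SimpleGraph.Walk.cons h q).support
      · -- produce a cycle
        have hzu : z ≠ u := fun h' => H.irrefl (h' ▸ hz)
        set p' := SimpleGraph.Walk.cons h q with hp'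
        have hp'path : p'.IsPath := SimpleGraph.Walk.cons_isPath_iff h q |>.2 hp
        set q₁ := p'.takeUntil z hzs with hq₁
        have hq₁path : q₁.IsPath := hp'path.takeUntil hzs
        have hedge : s(z, u) ∉ q₁.edges := by
          intro hmem
          have hsub := SimpleGraph.Walk.edges_takeUntil_subset p' hzs
          have : s(z, u) ∈ p'.edges := hsub hmem
          rw [hp'] at this
          simp only [SimpleGraph.Walk.edges_cons, List.mem_cons] at this
          rcases this with h' | h'
          · rw [Sym2.eq_iff] at h'
            rcases h' with ⟨h1', h2'⟩ | ⟨h1', h2'⟩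
            · exact hzu h1'
            · exact hzw h1'
          · have : u ∈ q.support := SimpleGraph.Walk.snd_mem_support_of_mem_edges q h'
            exact hp.2 this
        have hcyc : (SimpleGraph.Walk.cons (hz.symm) ↑(⟨q₁, hq₁path⟩ : H.Path u z)).IsCycle :=
          SimpleGraph.Path.cons_isCycle ⟨q₁, hq₁path⟩ hz.symm hedge
        exact hac _ hcyc
      · -- extend the path
        have : (SimpleGraph.Walk.cons (hz.symm) (SimpleGraph.Walk.cons h q)).IsPath := by
          rw [SimpleGraph.Walk.cons_isPath_iff]
          exact ⟨SimpleGraph.Walk.cons_isPath_iff h q |>.2 hp, hzs⟩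
        have hmem : ((SimpleGraph.Walk.cons (hz.symm) (SimpleGraph.Walk.cons h q)).length) ∈ L :=
          ⟨z, v, _, this, rfl⟩
        have := le_csSup hbdd hmem
        simp only [SimpleGraph.Walk.length_cons] at this hlen
        omega

lemma exists_leaf {V : Type*} [Fintype V] {G : SimpleGraph V} (hG : G.IsAcyclic)
    (S : Finset G.edgeSet) (hS : S.Nonempty) :
    ∃ e₀ ∈ S, ∃ u w : V, u ≠ w ∧ (e₀ : Sym2 V) = s(u, w) ∧
      ∀ e ∈ S, u ∈ (e : Sym2 V) → e = e₀ := by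
  classical
  set Es : Set (Sym2 V) := ↑(S.image (Subtype.val)) with hEs
  set H : SimpleGraph V := SimpleGraph.fromEdgeSet Es with hH
  have hHG : H ≤ G := by
    intro a b hab
    rw [hH, SimpleGraph.fromEdgeSet_adj] at hab
    obtain ⟨hmem, hne⟩ := hab
    rw [hEs] at hmem
    simp only [Finset.coe_image, Set.mem_image, Finset.mem_coe] at hmem
    obtain ⟨e, _, he⟩ := hmem
    have := e.2
    rw [he] at this
    exact (SimpleGraph.mem_edgeSet G).mp this
  have hHac : H.IsAcyclic := by
    intro v c hc
    have hsub : ∀ e ∈ c.edges, e ∈ G.edgeSet := by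
      intro e he
      exact (SimpleGraph.edgeSet_mono hHG) (SimpleGraph.Walk.edges_subset_edgeSet c he)
    exact hG _ (hc.transfer hsub)
  obtain ⟨e, heS⟩ := hS
  obtain ⟨b, hab⟩ := Sym2.mem_iff_exists.mp (Sym2.out_fst_mem (e : Sym2 V))
  set a := (e : Sym2 V).out.1 with ha
  have haband : G.Adj a b := (SimpleGraph.mem_edgeSet G).mp (hab ▸ e.2)
  have hHab : H.Adj a b := by
    rw [hH, SimpleGraph.fromEdgeSet_adj]
    refine ⟨?_, haband.ne⟩
    rw [hEs]
    simp only [Finset.coe_image, Set.mem_image, Finset.mem_coe]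
    exact ⟨e, heS, hab⟩
  obtain ⟨u, w, huw, huniq⟩ := exists_unique_nbr H hHac hHab
  have huw' := huw
  rw [hH, SimpleGraph.fromEdgeSet_adj, hEs] at huw'
  obtain ⟨hmem, hne⟩ := huw'
  simp only [Finset.coe_image, Set.mem_image, Finset.mem_coe] at hmem
  obtain ⟨e₀, he₀S, he₀val⟩ := hmem
  refine ⟨e₀, he₀S, u, w, hne, he₀val, ?_⟩
  intro e' he'S hue'
  obtain ⟨z, hz⟩ := Sym2.mem_iff_exists.mp hue'
  have hGz : G.Adj u z := (SimpleGraph.mem_edgeSet G).mp (hz ▸ e'.2)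
  have hHz : H.Adj u z := by
    rw [hH, SimpleGraph.fromEdgeSet_adj]
    refine ⟨?_, hGz.ne⟩
    rw [hEs]
    simp only [Finset.coe_image, Set.mem_image, Finset.mem_coe]
    exact ⟨e', he'S, hz⟩
  have hzw := huniq z hHz
  apply Subtype.ext
  rw [hz, hzw, ← he₀val]

end Leaf


section Step

variable {V : Type*} [Fintype V] {G : SimpleGraph V} {S : Finset G.edgeSet}
  {e₀ : G.edgeSet} {u w : V}

/-- Abbreviation for the induction hypothesis. -/
def IH (G : SimpleGraph V) [Fintype V] (S' : Finset G.edgeSet) : Prop :=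
  ∀ (ι : Type) [Fintype ι] [DecidableEq ι] (f g : ι → V ⊕ G.edgeSet),
    Function.Injective f → Function.Injective g →
    |((NS G S').submatrix f g).det| ≤ (PB G S' (Set.range f ∩ Set.range g) : ℤ)

lemma finish_bound (hS : e₀ ∈ S) (HIH : IH G (S.erase e₀))
    {ι : Type} [Fintype ι] [DecidableEq ι] {f g : ι → V ⊕ G.edgeSet}
    (hf : Injective f) (hg : Injective g) {Rf Rg : Set (V ⊕ G.edgeSet)}
    (hsf : Set.range f ⊆ Rf) (hsg : Set.range g ⊆ Rg)
    (hef : Sum.inr e₀ ∉ Set.range f) (heg : Sum.inr e₀ ∉ Set.range g) :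
    |((NS G S).submatrix f g).det| ≤ (PB G S (Rf ∩ Rg) : ℤ) := by
  have hsub : (NS G S).submatrix f g = (NS G (S.erase e₀)).submatrix f g := by
    ext i j
    exact NS_erase_eq _ _ (fun h => hef ⟨i, h⟩) (fun h => heg ⟨j, h⟩)
  rw [hsub]
  refine le_trans (HIH ι f g hf hg) ?_
  have := PB_mono (G := G) (Finset.erase_subset e₀ S)
    (Set.inter_subset_inter hsf hsg)
  exact_mod_cast this

lemma zero_bound {ι : Type} [Fintype ι] [DecidableEq ι] {f g : ι → V ⊕ G.edgeSet}
    {M : Matrix (V ⊕ G.edgeSet) (V ⊕ G.edgeSet) ℤ} (i₀ : ι)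
    (h : ∀ j, M (f i₀) (g j) = 0) {c : ℕ} :
    |((M).submatrix f g).det| ≤ (c : ℤ) := by
  have : ((M).submatrix f g).det = 0 := by
    apply Matrix.det_eq_zero_of_row_eq_zero i₀
    intro j
    exact h j
  rw [this]
  simp

/-- Case B: `e₀` is among the rows but not the columns. -/
lemma handleB (hS : e₀ ∈ S) (hme : ∀ x, x ∈ (e₀ : Sym2 V) ↔ x = u ∨ x = w)
    (hleaf : ∀ e ∈ S, u ∈ (e : Sym2 V) → e = e₀) (huw : u ≠ w)
    (HIH : IH G (S.erase e₀))
    {ι : Type} [Fintype ι] [DecidableEq ι] {f g : ι → V ⊕ G.edgeSet}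
    (hf : Injective f) (hg : Injective g)
    (hRe : Sum.inr e₀ ∈ Set.range f) (hCe : Sum.inr e₀ ∉ Set.range g) :
    |((NS G S).submatrix f g).det| ≤ (PB G S (Set.range f ∩ Set.range g) : ℤ) := by
  classical
  have hu : u ∈ (e₀ : Sym2 V) := (hme u).2 (Or.inl rfl)
  have hw : w ∈ (e₀ : Sym2 V) := (hme w).2 (Or.inr rfl)
  obtain ⟨i_e, hie⟩ := hRe
  by_cases hCu : Sum.inl u ∈ Set.range g
  · obtain ⟨j_u, hju⟩ := hCu
    by_cases hRu : Sum.inl u ∈ Set.range f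
    · obtain ⟨i_u, hiu⟩ := hRu
      have hrow : ∀ j, j ≠ j_u → NS G S (f i_u) (g j) = 0 := by
        intro j hj
        rw [hiu, NS_symm, col_u hS hme hleaf, if_neg]
        rintro (h | h)
        · exact hj (hg (h.trans hju.symm))
        · exact hCe ⟨j, h⟩
      obtain ⟨ι₁, iF₁, iD₁, f₁, g₁, hf₁, hg₁, hrf₁, hrg₁, hdet₁⟩ :=
        delete_row (NS G S) hf hg i_u j_u hrow
      rw [hdet₁, hiu, hju]
      have hfac : |NS G S (Sum.inl u) (Sum.inl u)| = 1 := by simp [NS]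
      rw [hfac, one_mul]
      have hre₁ : Sum.inr e₀ ∈ Set.range f₁ := by
        rw [hrf₁, hiu]; exact ⟨⟨i_e, hie⟩, by simp⟩
      obtain ⟨x_e, hxe⟩ := hre₁
      by_cases hCw : Sum.inl w ∈ Set.range g
      · have hCW₁ : Sum.inl w ∈ Set.range g₁ := by
          rw [hrg₁, hju]
          exact ⟨hCw, by simp [Ne.symm huw]⟩
        obtain ⟨y_w, hyw⟩ := hCW₁
        have hrow₂ : ∀ y, y ≠ y_w → NS G S (f₁ x_e) (g₁ y) = 0 := by
          intro y hy
          rw [hxe, NS_symm, col_e hS hme, if_neg]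
          rintro (h | h | h)
          · have : g₁ y ∈ Set.range g₁ := ⟨y, rfl⟩
            rw [hrg₁] at this
            exact hCe (h ▸ this.1)
          · have : g₁ y ∈ Set.range g₁ := ⟨y, rfl⟩
            rw [hrg₁, hju] at this
            exact this.2 (by simp [h])
          · exact hy (hg₁ (h.trans hyw.symm))
        obtain ⟨ι₂, iF₂, iD₂, f₂, g₂, hf₂, hg₂, hrf₂, hrg₂, hdet₂⟩ :=
          delete_row (NS G S) hf₁ hg₁ x_e y_w hrow₂
        rw [hdet₂, hxe, hyw]
        have hfac₂ : |NS G S (Sum.inr e₀) (Sum.inl w)| = 1 := by simp [NS, hS, hw]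
        rw [hfac₂, one_mul]
        refine finish_bound hS HIH hf₂ hg₂ ?_ ?_ ?_ ?_
        · rw [hrf₂, hrf₁]
          exact (Set.diff_subset.trans Set.diff_subset)
        · rw [hrg₂, hrg₁]
          exact (Set.diff_subset.trans Set.diff_subset)
        · rw [hrf₂, hxe]
          intro hmem
          exact hmem.2 rfl
        · rw [hrg₂, hrg₁]
          intro hmem
          exact hCe hmem.1.1
      · -- zero row
        apply zero_bound x_e
        intro y
        rw [hxe, NS_symm, col_e hS hme, if_neg]
        rintro (h | h | h)
        · have : g₁ y ∈ Set.range g₁ := ⟨y, rfl⟩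
          rw [hrg₁] at this
          exact hCe (h ▸ this.1)
        · have : g₁ y ∈ Set.range g₁ := ⟨y, rfl⟩
          rw [hrg₁, hju] at this
          exact this.2 (by simp [h])
        · have : g₁ y ∈ Set.range g₁ := ⟨y, rfl⟩
          rw [hrg₁] at this
          exact hCw (h ▸ this.1)
    · -- ¬Ru : unit column at (i_e, j_u)
      have hcol : ∀ i, i ≠ i_e → NS G S (f i) (g j_u) = 0 := by
        intro i hi
        rw [hju, col_u hS hme hleaf, if_neg]
        rintro (h | h)
        · exact hRu ⟨i, h⟩
        · exact hi (hf (h.trans hie.symm))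
      obtain ⟨ι₁, iF₁, iD₁, f₁, g₁, hf₁, hg₁, hrf₁, hrg₁, hdet₁⟩ :=
        delete_col (NS G S) hf hg i_e j_u hcol
      rw [hdet₁, hie, hju]
      have hfac : |NS G S (Sum.inr e₀) (Sum.inl u)| = 1 := by simp [NS, hS, hu]
      rw [hfac, one_mul]
      refine finish_bound hS HIH hf₁ hg₁ ?_ ?_ ?_ ?_
      · rw [hrf₁]; exact Set.diff_subset
      · rw [hrg₁]; exact Set.diff_subset
      · rw [hrf₁, hie]
        intro hmem
        exact hmem.2 rfl
      · rw [hrg₁]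
        intro hmem
        exact hCe hmem.1
  · -- ¬Cu : row i_e has at most one nonzero entry, at column of `inl w`
    by_cases hCw : Sum.inl w ∈ Set.range g
    · obtain ⟨j_w, hjw⟩ := hCw
      have hrow : ∀ j, j ≠ j_w → NS G S (f i_e) (g j) = 0 := by
        intro j hj
        rw [hie, NS_symm, col_e hS hme, if_neg]
        rintro (h | h | h)
        · exact hCe ⟨j, h⟩
        · exact hCu ⟨j, h⟩
        · exact hj (hg (h.trans hjw.symm))
      obtain ⟨ι₁, iF₁, iD₁, f₁, g₁, hf₁, hg₁, hrf₁, hrg₁, hdet₁⟩ :=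
        delete_row (NS G S) hf hg i_e j_w hrow
      rw [hdet₁, hie, hjw]
      have hfac : |NS G S (Sum.inr e₀) (Sum.inl w)| = 1 := by simp [NS, hS, hw]
      rw [hfac, one_mul]
      refine finish_bound hS HIH hf₁ hg₁ ?_ ?_ ?_ ?_
      · rw [hrf₁]; exact Set.diff_subset
      · rw [hrg₁]; exact Set.diff_subset
      · rw [hrf₁, hie]
        intro hmem
        exact hmem.2 rfl
      · rw [hrg₁]
        intro hmem
        exact hCe hmem.1
    · apply zero_bound i_e
      intro j
      rw [hie, NS_symm, col_e hS hme, if_neg]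
      rintro (h | h | h)
      · exact hCe ⟨j, h⟩
      · exact hCu ⟨j, h⟩
      · exact hCw ⟨j, h⟩

/-- Case C2: `e₀` among rows and columns, `u` among rows but not columns. -/
lemma handleC2 (hS : e₀ ∈ S) (hme : ∀ x, x ∈ (e₀ : Sym2 V) ↔ x = u ∨ x = w)
    (hleaf : ∀ e ∈ S, u ∈ (e : Sym2 V) → e = e₀) (huw : u ≠ w)
    (HIH : IH G (S.erase e₀))
    {ι : Type} [Fintype ι] [DecidableEq ι] {f g : ι → V ⊕ G.edgeSet}
    (hf : Injective f) (hg : Injective g)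
    (hRe : Sum.inr e₀ ∈ Set.range f) (hCe : Sum.inr e₀ ∈ Set.range g)
    (hRu : Sum.inl u ∈ Set.range f) (hCu : Sum.inl u ∉ Set.range g) :
    |((NS G S).submatrix f g).det| ≤ (PB G S (Set.range f ∩ Set.range g) : ℤ) := by
  classical
  have hu : u ∈ (e₀ : Sym2 V) := (hme u).2 (Or.inl rfl)
  have hw : w ∈ (e₀ : Sym2 V) := (hme w).2 (Or.inr rfl)
  obtain ⟨i_u, hiu⟩ := hRu
  obtain ⟨j_e, hje⟩ := hCe
  have hrow : ∀ j, j ≠ j_e → NS G S (f i_u) (g j) = 0 := by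
    intro j hj
    rw [hiu, NS_symm, col_u hS hme hleaf, if_neg]
    rintro (h | h)
    · exact hCu ⟨j, h⟩
    · exact hj (hg (h.trans hje.symm))
  obtain ⟨ι₁, iF₁, iD₁, f₁, g₁, hf₁, hg₁, hrf₁, hrg₁, hdet₁⟩ :=
    delete_row (NS G S) hf hg i_u j_e hrow
  rw [hdet₁, hiu, hje]
  have hfac : |NS G S (Sum.inl u) (Sum.inr e₀)| = 1 := by simp [NS, hS, hu]
  rw [hfac, one_mul]
  have hre₁ : Sum.inr e₀ ∈ Set.range f₁ := by
    rw [hrf₁, hiu]; exact ⟨hRe, by simp⟩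
  obtain ⟨x_e, hxe⟩ := hre₁
  by_cases hCw : Sum.inl w ∈ Set.range g
  · have hCW₁ : Sum.inl w ∈ Set.range g₁ := by
      rw [hrg₁, hje]; exact ⟨hCw, by simp⟩
    obtain ⟨y_w, hyw⟩ := hCW₁
    have hrow₂ : ∀ y, y ≠ y_w → NS G S (f₁ x_e) (g₁ y) = 0 := by
      intro y hy
      rw [hxe, NS_symm, col_e hS hme, if_neg]
      rintro (h | h | h)
      · have : g₁ y ∈ Set.range g₁ := ⟨y, rfl⟩
        rw [hrg₁, hje] at this
        exact this.2 (by simp [h])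
      · have : g₁ y ∈ Set.range g₁ := ⟨y, rfl⟩
        rw [hrg₁] at this
        exact hCu (h ▸ this.1)
      · exact hy (hg₁ (h.trans hyw.symm))
    obtain ⟨ι₂, iF₂, iD₂, f₂, g₂, hf₂, hg₂, hrf₂, hrg₂, hdet₂⟩ :=
      delete_row (NS G S) hf₁ hg₁ x_e y_w hrow₂
    rw [hdet₂, hxe, hyw]
    have hfac₂ : |NS G S (Sum.inr e₀) (Sum.inl w)| = 1 := by simp [NS, hS, hw]
    rw [hfac₂, one_mul]
    refine finish_bound hS HIH hf₂ hg₂ ?_ ?_ ?_ ?_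
    · rw [hrf₂, hrf₁]; exact (Set.diff_subset.trans Set.diff_subset)
    · rw [hrg₂, hrg₁]; exact (Set.diff_subset.trans Set.diff_subset)
    · rw [hrf₂, hxe]
      intro hmem
      exact hmem.2 rfl
    · rw [hrg₂, hrg₁, hje]
      intro hmem
      exact hmem.1.2 rfl
  · apply zero_bound x_e
    intro y
    rw [hxe, NS_symm, col_e hS hme, if_neg]
    rintro (h | h | h)
    · have : g₁ y ∈ Set.range g₁ := ⟨y, rfl⟩
      rw [hrg₁, hje] at this
      exact this.2 (by simp [h])
    · have : g₁ y ∈ Set.range g₁ := ⟨y, rfl⟩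
      rw [hrg₁] at this
      exact hCu (h ▸ this.1)
    · have : g₁ y ∈ Set.range g₁ := ⟨y, rfl⟩
      rw [hrg₁] at this
      exact hCw (h ▸ this.1)

/-- Case C1: `e₀`, `u` among both rows and columns. -/
lemma handleC1 (hS : e₀ ∈ S) (hme : ∀ x, x ∈ (e₀ : Sym2 V) ↔ x = u ∨ x = w)
    (hleaf : ∀ e ∈ S, u ∈ (e : Sym2 V) → e = e₀) (huw : u ≠ w)
    (HIH : IH G (S.erase e₀))
    {ι : Type} [Fintype ι] [DecidableEq ι] {f g : ι → V ⊕ G.edgeSet}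
    (hf : Injective f) (hg : Injective g)
    (hRe : Sum.inr e₀ ∈ Set.range f) (hCe : Sum.inr e₀ ∈ Set.range g)
    (hRu : Sum.inl u ∈ Set.range f) (hCu : Sum.inl u ∈ Set.range g) :
    |((NS G S).submatrix f g).det| ≤ (PB G S (Set.range f ∩ Set.range g) : ℤ) := by
  classical
  have hu : u ∈ (e₀ : Sym2 V) := (hme u).2 (Or.inl rfl)
  have hw : w ∈ (e₀ : Sym2 V) := (hme w).2 (Or.inr rfl)
  obtain ⟨i_u, hiu⟩ := hRu
  obtain ⟨j_u, hju⟩ := hCu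
  obtain ⟨j_e, hje⟩ := hCe
  have hjuje : j_u ≠ j_e := by
    intro h
    rw [h, hje] at hju
    exact (by simp : (Sum.inr e₀ : V ⊕ G.edgeSet) ≠ Sum.inl u) hju
  have hcoleq : ∀ i, f i ≠ Sum.inl w →
      NS G S (f i) (g j_u) = NS G S (f i) (g j_e) := by
    intro i hw'
    rw [hju, hje, col_u hS hme hleaf, col_e hS hme]
    by_cases h1 : f i = Sum.inl u
    · simp [h1]
    · by_cases h2 : f i = Sum.inr e₀
      · simp [h2]
      · rw [if_neg (by tauto), if_neg (by tauto)]
  by_cases hRw : Sum.inl w ∈ Set.range f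
  · obtain ⟨i_w, hiw⟩ := hRw
    have hsub : ∀ i, i ≠ i_w → NS G S (f i) (g j_u) = NS G S (f i) (g j_e) := by
      intro i hi
      exact hcoleq i (fun h => hi (hf (h.trans hiw.symm)))
    obtain ⟨ι₁, iF₁, iD₁, f₁, g₁, hf₁, hg₁, hrf₁, hrg₁, hdet₁⟩ :=
      subtract_delete_col (NS G S) hf hg i_w j_u j_e hjuje hsub
    rw [hdet₁, hiw, hju, hje]
    have hfac : |NS G S (Sum.inl w) (Sum.inl u) - NS G S (Sum.inl w) (Sum.inr e₀)| = 1 := by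
      simp [NS, hS, hw, Ne.symm huw]
    rw [hfac, one_mul]
    -- now delete row of `u` against column of `e₀`
    have hxu : Sum.inl u ∈ Set.range f₁ := by
      rw [hrf₁, hiw]
      exact ⟨⟨i_u, hiu⟩, by simp [huw]⟩
    obtain ⟨x_u, hxu'⟩ := hxu
    have hye : Sum.inr e₀ ∈ Set.range g₁ := by
      rw [hrg₁, hju]
      exact ⟨⟨j_e, hje⟩, by simp⟩
    obtain ⟨y_e, hye'⟩ := hye
    have hrow : ∀ y, y ≠ y_e → NS G S (f₁ x_u) (g₁ y) = 0 := by
      intro y hy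
      rw [hxu', NS_symm, col_u hS hme hleaf, if_neg]
      rintro (h | h)
      · have : g₁ y ∈ Set.range g₁ := ⟨y, rfl⟩
        rw [hrg₁, hju] at this
        exact this.2 (by simp [h])
      · exact hy (hg₁ (h.trans hye'.symm))
    obtain ⟨ι₂, iF₂, iD₂, f₂, g₂, hf₂, hg₂, hrf₂, hrg₂, hdet₂⟩ :=
      delete_row (NS G S) hf₁ hg₁ x_u y_e hrow
    rw [hdet₂, hxu', hye']
    have hfac₂ : |NS G S (Sum.inl u) (Sum.inr e₀)| = 1 := by simp [NS, hS, hu]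
    rw [hfac₂, one_mul]
    -- now the row of `e₀`
    have hxe : Sum.inr e₀ ∈ Set.range f₂ := by
      rw [hrf₂, hrf₁, hxu', hiw]
      exact ⟨⟨hRe, by simp⟩, by simp⟩
    obtain ⟨x_e, hxe'⟩ := hxe
    by_cases hCw : Sum.inl w ∈ Set.range g
    · have hyw : Sum.inl w ∈ Set.range g₂ := by
        rw [hrg₂, hrg₁, hye', hju]
        exact ⟨⟨hCw, by simp [Ne.symm huw]⟩, by simp⟩
      obtain ⟨y_w, hyw'⟩ := hyw
      have hrow₃ : ∀ y, y ≠ y_w → NS G S (f₂ x_e) (g₂ y) = 0 := by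
        intro y hy
        rw [hxe', NS_symm, col_e hS hme, if_neg]
        rintro (h | h | h)
        · have : g₂ y ∈ Set.range g₂ := ⟨y, rfl⟩
          rw [hrg₂, hye'] at this
          exact this.2 (by simp [h])
        · have : g₂ y ∈ Set.range g₂ := ⟨y, rfl⟩
          rw [hrg₂, hrg₁, hju] at this
          exact this.1.2 (by simp [h])
        · exact hy (hg₂ (h.trans hyw'.symm))
      obtain ⟨ι₃, iF₃, iD₃, f₃, g₃, hf₃, hg₃, hrf₃, hrg₃, hdet₃⟩ :=
        delete_row (NS G S) hf₂ hg₂ x_e y_w hrow₃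
      rw [hdet₃, hxe', hyw']
      have hfac₃ : |NS G S (Sum.inr e₀) (Sum.inl w)| = 1 := by simp [NS, hS, hw]
      rw [hfac₃, one_mul]
      refine finish_bound hS HIH hf₃ hg₃ ?_ ?_ ?_ ?_
      · rw [hrf₃, hrf₂, hrf₁]
        exact ((Set.diff_subset.trans Set.diff_subset).trans Set.diff_subset)
      · rw [hrg₃, hrg₂, hrg₁]
        exact ((Set.diff_subset.trans Set.diff_subset).trans Set.diff_subset)
      · rw [hrf₃, hxe']
        intro hmem
        exact hmem.2 rfl
      · rw [hrg₃, hrg₂, hye']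
        intro hmem
        exact hmem.1.2 rfl
    · apply zero_bound x_e
      intro y
      rw [hxe', NS_symm, col_e hS hme, if_neg]
      rintro (h | h | h)
      · have : g₂ y ∈ Set.range g₂ := ⟨y, rfl⟩
        rw [hrg₂, hye'] at this
        exact this.2 (by simp [h])
      · have : g₂ y ∈ Set.range g₂ := ⟨y, rfl⟩
        rw [hrg₂, hrg₁, hju] at this
        exact this.1.2 (by simp [h])
      · have : g₂ y ∈ Set.range g₂ := ⟨y, rfl⟩
        rw [hrg₂, hrg₁] at this
        exact hCw (h ▸ this.1.1)
  · -- `w` not among rows: the two columns agree everywhere, so the determinant vanishes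
    have hsub : ∀ i, i ≠ i_u → NS G S (f i) (g j_u) = NS G S (f i) (g j_e) := by
      intro i _
      exact hcoleq i (fun h => hRw ⟨i, h⟩)
    obtain ⟨ι₁, iF₁, iD₁, f₁, g₁, hf₁, hg₁, hrf₁, hrg₁, hdet₁⟩ :=
      subtract_delete_col (NS G S) hf hg i_u j_u j_e hjuje hsub
    rw [hdet₁, hiu, hju, hje]
    have hfac : |NS G S (Sum.inl u) (Sum.inl u) - NS G S (Sum.inl u) (Sum.inr e₀)| = 0 := by
      simp [NS, hS, hu]
    rw [hfac, zero_mul]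
    positivity

lemma ite_neg_one {c : Prop} [Decidable c] :
    (if c then (-1 : ℤ) else 0) = -(if c then 1 else 0) := by
  split <;> simp

/-- Case C4: `e₀` among rows and columns, `u` in neither. -/
lemma handleC4 (hS : e₀ ∈ S) (hme : ∀ x, x ∈ (e₀ : Sym2 V) ↔ x = u ∨ x = w)
    (hleaf : ∀ e ∈ S, u ∈ (e : Sym2 V) → e = e₀) (huw : u ≠ w)
    (HIH : IH G (S.erase e₀))
    {ι : Type} [Fintype ι] [DecidableEq ι] {f g : ι → V ⊕ G.edgeSet}
    (hf : Injective f) (hg : Injective g)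
    (hRe : Sum.inr e₀ ∈ Set.range f) (hCe : Sum.inr e₀ ∈ Set.range g)
    (hRu : Sum.inl u ∉ Set.range f) (hCu : Sum.inl u ∉ Set.range g) :
    |((NS G S).submatrix f g).det| ≤ (PB G S (Set.range f ∩ Set.range g) : ℤ) := by
  classical
  have hu : u ∈ (e₀ : Sym2 V) := (hme u).2 (Or.inl rfl)
  have hw : w ∈ (e₀ : Sym2 V) := (hme w).2 (Or.inr rfl)
  obtain ⟨i_e, hie⟩ := hRe
  obtain ⟨j_e, hje⟩ := hCe
  by_cases hRw : Sum.inl w ∈ Set.range f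
  swap
  · -- `w` not among rows: unit column at `(i_e, j_e)`
    have hcol : ∀ i, i ≠ i_e → NS G S (f i) (g j_e) = 0 := by
      intro i hi
      rw [hje, col_e hS hme, if_neg]
      rintro (h | h | h)
      · exact hi (hf (h.trans hie.symm))
      · exact hRu ⟨i, h⟩
      · exact hRw ⟨i, h⟩
    obtain ⟨ι₁, iF₁, iD₁, f₁, g₁, hf₁, hg₁, hrf₁, hrg₁, hdet₁⟩ :=
      delete_col (NS G S) hf hg i_e j_e hcol
    rw [hdet₁, hie, hje]
    have hfac : |NS G S (Sum.inr e₀) (Sum.inr e₀)| = 1 := by simp [NS]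
    rw [hfac, one_mul]
    refine finish_bound hS HIH hf₁ hg₁ ?_ ?_ ?_ ?_
    · rw [hrf₁]; exact Set.diff_subset
    · rw [hrg₁]; exact Set.diff_subset
    · rw [hrf₁, hie]; intro hmem; exact hmem.2 rfl
    · rw [hrg₁, hje]; intro hmem; exact hmem.2 rfl
  by_cases hCw : Sum.inl w ∈ Set.range g
  swap
  · -- `w` not among columns: unit row at `(i_e, j_e)`
    have hrow : ∀ j, j ≠ j_e → NS G S (f i_e) (g j) = 0 := by
      intro j hj
      rw [hie, NS_symm, col_e hS hme, if_neg]
      rintro (h | h | h)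
      · exact hj (hg (h.trans hje.symm))
      · exact hCu ⟨j, h⟩
      · exact hCw ⟨j, h⟩
    obtain ⟨ι₁, iF₁, iD₁, f₁, g₁, hf₁, hg₁, hrf₁, hrg₁, hdet₁⟩ :=
      delete_row (NS G S) hf hg i_e j_e hrow
    rw [hdet₁, hie, hje]
    have hfac : |NS G S (Sum.inr e₀) (Sum.inr e₀)| = 1 := by simp [NS]
    rw [hfac, one_mul]
    refine finish_bound hS HIH hf₁ hg₁ ?_ ?_ ?_ ?_
    · rw [hrf₁]; exact Set.diff_subset
    · rw [hrg₁]; exact Set.diff_subset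
    · rw [hrf₁, hie]; intro hmem; exact hmem.2 rfl
    · rw [hrg₁, hje]; intro hmem; exact hmem.2 rfl
  -- the hard case
  obtain ⟨j_w, hjw⟩ := hCw
  have hCw' : Sum.inl w ∈ Set.range g := ⟨j_w, hjw⟩
  have hjejw : j_e ≠ j_w := by
    intro h
    rw [h, hjw] at hje
    simp at hje
  set N := (NS G S).submatrix f g with hN
  set T := (S.filter (fun e' : G.edgeSet => w ∈ (e' : Sym2 V))).erase e₀ with hT
  have he₀filter : e₀ ∈ S.filter (fun e' : G.edgeSet => w ∈ (e' : Sym2 V)) :=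
    Finset.mem_filter.mpr ⟨hS, hw⟩
  have hkey : ∀ i, N i j_e + (-1 : ℤ) • N i j_w
      = ∑ e' ∈ T, (if f i = Sum.inr e' then (-1 : ℤ) else 0) := by
    intro i
    have h1 : N i j_e = if f i = Sum.inr e₀ ∨ f i = Sum.inl u ∨ f i = Sum.inl w
        then 1 else 0 := by
      rw [hN, Matrix.submatrix_apply, hje, col_e hS hme]
    have h2 : N i j_w = (if f i = Sum.inl w then 1 else 0) +
        ∑ e' ∈ S.filter (fun e' : G.edgeSet => w ∈ (e' : Sym2 V)),
          (if f i = Sum.inr e' then (1 : ℤ) else 0) := by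
      rw [hN, Matrix.submatrix_apply, hjw, col_w]
    rw [h1, h2]
    have hsplit : ∑ e' ∈ S.filter (fun e' : G.edgeSet => w ∈ (e' : Sym2 V)),
        (if f i = Sum.inr e' then (1 : ℤ) else 0)
        = (if f i = Sum.inr e₀ then (1 : ℤ) else 0)
          + ∑ e' ∈ T, (if f i = Sum.inr e' then (1 : ℤ) else 0) := by
      rw [hT]
      exact (Finset.add_sum_erase _
        (fun e' => if f i = Sum.inr e' then (1 : ℤ) else 0) he₀filter).symm
    rw [hsplit]
    have hfu : f i ≠ Sum.inl u := fun h => hRu ⟨i, h⟩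
    by_cases hfw : f i = Sum.inl w
    · have : ∀ e' ∈ T, (if f i = Sum.inr e' then (-1 : ℤ) else 0) = 0 := by
        intro e' _; rw [if_neg]; rw [hfw]; simp
      rw [Finset.sum_eq_zero this]
      have : ∀ e' ∈ T, (if f i = Sum.inr e' then (1 : ℤ) else 0) = 0 := by
        intro e' _; rw [if_neg]; rw [hfw]; simp
      rw [Finset.sum_eq_zero this]
      simp [hfw]
    · by_cases hfe : f i = Sum.inr e₀
      · have : ∀ e' ∈ T, (if f i = Sum.inr e' then (-1 : ℤ) else 0) = 0 := by
          intro e' he'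
          rw [if_neg]
          rw [hfe]
          simp only [Sum.inr.injEq]
          exact fun h => (Finset.mem_erase.mp he').1 h.symm
        rw [Finset.sum_eq_zero this]
        have : ∀ e' ∈ T, (if f i = Sum.inr e' then (1 : ℤ) else 0) = 0 := by
          intro e' he'
          rw [if_neg]
          rw [hfe]
          simp only [Sum.inr.injEq]
          exact fun h => (Finset.mem_erase.mp he').1 h.symm
        rw [Finset.sum_eq_zero this]
        simp [hfe, hfw]
      · rw [if_neg (by tauto), if_neg hfw, if_neg hfe]
        have hneg : ∑ e' ∈ T, (if f i = Sum.inr e' then (-1 : ℤ) else 0)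
            = -∑ e' ∈ T, (if f i = Sum.inr e' then (1 : ℤ) else 0) := by
          rw [← Finset.sum_neg_distrib]
          exact Finset.sum_congr rfl (fun x _ => ite_neg_one)
        rw [hneg]
        simp
  have hdet1 : N.det = (N.updateCol j_e
      (fun k => N k j_e + (-1 : ℤ) • N k j_w)).det :=
    (Matrix.det_updateCol_add_smul_self N hjejw (-1)).symm
  have hdet2 : (N.updateCol j_e (fun k => N k j_e + (-1 : ℤ) • N k j_w)).det
      = ∑ e' ∈ T, (N.updateCol j_e
          (fun i => if f i = Sum.inr e' then (-1 : ℤ) else 0)).det := by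
    rw [show (fun k => N k j_e + (-1 : ℤ) • N k j_w)
        = (fun i => ∑ e' ∈ T, (if f i = Sum.inr e' then (-1 : ℤ) else 0)) from
        funext hkey]
    exact det_updateCol_finset_sum N j_e T _
  set Q := PB G (S.erase e₀) (Set.range f ∩ (Set.range g \ {Sum.inl w})) with hQdef
  have hterm : ∀ e' ∈ T, |(N.updateCol j_e
      (fun i => if f i = Sum.inr e' then (-1 : ℤ) else 0)).det| ≤ (Q : ℤ) := by
    intro e' he'
    have he'e₀ : e' ≠ e₀ := (Finset.mem_erase.mp he').1
    set M := N.updateCol j_e (fun i => if f i = Sum.inr e' then (-1 : ℤ) else 0) with hM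
    by_cases hre' : Sum.inr e' ∈ Set.range f
    swap
    · have : M.det = 0 := by
        apply Matrix.det_eq_zero_of_column_eq_zero j_e
        intro i
        rw [hM, Matrix.updateCol_self, if_neg (fun h => hre' ⟨i, h⟩)]
      rw [this]
      simp
    obtain ⟨i₁, hi₁⟩ := hre'
    have hcol0 : ∀ i, i ≠ i₁ → M i j_e = 0 := by
      intro i hi
      rw [hM, Matrix.updateCol_self, if_neg (fun h => hi (hf (h.trans hi₁.symm)))]
    have hpiv := abs_det_pivot_col M i₁ j_e hcol0
    have hfac : |M i₁ j_e| = 1 := by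
      rw [hM, Matrix.updateCol_self, if_pos hi₁]
      simp
    rw [hpiv, hfac, one_mul]
    have hminor : M.submatrix (fun x : {i : ι // i ≠ i₁} => (x : ι))
        (fun x : {i : ι // i ≠ i₁} => Equiv.swap i₁ j_e (x : ι))
        = (NS G S).submatrix (fun x : {i : ι // i ≠ i₁} => f ↑x)
          (fun x : {i : ι // i ≠ i₁} => g (Equiv.swap i₁ j_e ↑x)) := by
      ext x y
      have hy : Equiv.swap i₁ j_e (y : ι) ≠ j_e := by
        intro hy
        exact y.2 ((Equiv.swap i₁ j_e).injective (by simpa using hy))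
      simp [hM, hN, Matrix.updateCol_ne hy]
    rw [hminor]
    set f' : {i : ι // i ≠ i₁} → V ⊕ G.edgeSet := fun x => f ↑x with hf'def
    set g' : {i : ι // i ≠ i₁} → V ⊕ G.edgeSet := fun x => g (Equiv.swap i₁ j_e ↑x) with hg'def
    have hf' : Injective f' := hf.comp Subtype.val_injective
    have hg' : Injective g' :=
      hg.comp ((Equiv.swap i₁ j_e).injective.comp Subtype.val_injective)
    have hrf' : Set.range f' = Set.range f \ {f i₁} := range_comp_val hf i₁
    have hrg' : Set.range g' = Set.range g \ {g j_e} := range_comp_swap hg i₁ j_e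
    -- delete the row of `e₀` against the column of `w`
    have hxe : Sum.inr e₀ ∈ Set.range f' := by
      rw [hrf', hi₁]
      refine ⟨⟨i_e, hie⟩, ?_⟩
      simp only [Set.mem_singleton_iff, Sum.inr.injEq]
      exact fun h => he'e₀ h.symm
    obtain ⟨x_e, hxe'⟩ := hxe
    have hyw : Sum.inl w ∈ Set.range g' := by
      rw [hrg', hje]
      exact ⟨⟨j_w, hjw⟩, by simp⟩
    obtain ⟨y_w, hyw'⟩ := hyw
    have hrow : ∀ y, y ≠ y_w → NS G S (f' x_e) (g' y) = 0 := by
      intro y hy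
      rw [hxe', NS_symm, col_e hS hme, if_neg]
      rintro (h | h | h)
      · have : g' y ∈ Set.range g' := ⟨y, rfl⟩
        rw [hrg', hje] at this
        exact this.2 (by simp [h])
      · have : g' y ∈ Set.range g' := ⟨y, rfl⟩
        rw [hrg'] at this
        exact hCu (h ▸ this.1)
      · exact hy (hg' (h.trans hyw'.symm))
    obtain ⟨ι₂, iF₂, iD₂, f₂, g₂, hf₂, hg₂, hrf₂, hrg₂, hdet₂⟩ :=
      delete_row (NS G S) hf' hg' x_e y_w hrow
    rw [hdet₂, hxe', hyw']
    have hfac₂ : |NS G S (Sum.inr e₀) (Sum.inl w)| = 1 := by simp [NS, hS, hw]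
    rw [hfac₂, one_mul]
    -- ranges of f₂, g₂ avoid `e₀`, conclude by the induction hypothesis
    have hef₂ : Sum.inr e₀ ∉ Set.range f₂ := by
      rw [hrf₂, hxe']
      intro hmem
      exact hmem.2 rfl
    have heg₂ : Sum.inr e₀ ∉ Set.range g₂ := by
      rw [hrg₂, hrg', hje]
      intro hmem
      exact hmem.1.2 rfl
    have hsub : (NS G S).submatrix f₂ g₂ = (NS G (S.erase e₀)).submatrix f₂ g₂ := by
      ext i j
      exact NS_erase_eq _ _ (fun h => hef₂ ⟨i, h⟩) (fun h => heg₂ ⟨j, h⟩)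
    rw [hsub]
    refine le_trans (HIH ι₂ f₂ g₂ hf₂ hg₂) ?_
    have hmono : PB G (S.erase e₀) (Set.range f₂ ∩ Set.range g₂) ≤ Q := by
      rw [hQdef]
      apply PB_mono (le_refl _)
      apply Set.inter_subset_inter
      · rw [hrf₂, hrf']
        exact Set.diff_subset.trans Set.diff_subset
      · rw [hrg₂, hrg', hyw', hje]
        intro x hx
        exact ⟨hx.1.1, hx.2⟩
    exact_mod_cast hmono
  have hsum : |N.det| ≤ (T.card : ℤ) * (Q : ℤ) := by
    rw [hdet1, hdet2]
    refine le_trans (Finset.abs_sum_le_sum_abs _ _) ?_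
    calc ∑ e' ∈ T, |(N.updateCol j_e
          (fun i => if f i = Sum.inr e' then (-1 : ℤ) else 0)).det|
        ≤ ∑ _e' ∈ T, (Q : ℤ) := Finset.sum_le_sum hterm
      _ = (T.card : ℤ) * (Q : ℤ) := by rw [Finset.sum_const, nsmul_eq_mul]
  refine le_trans hsum ?_
  have := PB_hard (G := G) hS hw
    (A' := Set.range f ∩ (Set.range g \ {Sum.inl w}))
    (A := Set.range f ∩ Set.range g)
    (Set.inter_subset_inter (le_refl _) Set.diff_subset)
    (fun hmem => hmem.2.2 rfl)
    ⟨hRw, hCw'⟩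
  rw [← hT] at this
  exact_mod_cast this

lemma swap_bound {V : Type*} [Fintype V] {G : SimpleGraph V} {S : Finset G.edgeSet}
    {ι : Type} [Fintype ι] [DecidableEq ι] {f g : ι → V ⊕ G.edgeSet}
    (h : |((NS G S).submatrix g f).det| ≤ (PB G S (Set.range g ∩ Set.range f) : ℤ)) :
    |((NS G S).submatrix f g).det| ≤ (PB G S (Set.range f ∩ Set.range g) : ℤ) := by
  rw [Set.inter_comm]
  rw [abs_det_submatrix_swap (NS G S) (f := f) (g := g), NS_transpose] at *
  exact h

theorem main_bound {V : Type*} [Fintype V] {G : SimpleGraph V} (hG : G.IsAcyclic) :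
    ∀ (n : ℕ) (S : Finset G.edgeSet), S.card = n → IH G S := by
  intro n
  induction n with
  | zero =>
      intro S hcard ι _ _ f g hf hg
      have hempty : S = ∅ := Finset.card_eq_zero.mp hcard
      subst hempty
      rw [NS_empty]
      refine le_trans (abs_det_submatrix_one_le hf hg) ?_
      rw [PB_empty]
      norm_num
  | succ n IHn =>
      intro S hcard
      have hne : S.Nonempty := by
        rw [← Finset.card_pos, hcard]; omega
      obtain ⟨e₀, hS, u, w, huw, hval, hleaf⟩ := exists_leaf hG S hne
      have hme : ∀ x, x ∈ (e₀ : Sym2 V) ↔ x = u ∨ x = w := by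
        intro x; rw [hval]; exact Sym2.mem_iff
      have HIH : IH G (S.erase e₀) := IHn (S.erase e₀)
        (by rw [Finset.card_erase_of_mem hS, hcard]; rfl)
      intro ι iF iD f g hf hg
      by_cases hRe : Sum.inr e₀ ∈ Set.range f <;>
        by_cases hCe : Sum.inr e₀ ∈ Set.range g
      · by_cases hRu : Sum.inl u ∈ Set.range f <;>
          by_cases hCu : Sum.inl u ∈ Set.range g
        · exact handleC1 hS hme hleaf huw HIH hf hg hRe hCe hRu hCu
        · exact handleC2 hS hme hleaf huw HIH hf hg hRe hCe hRu hCu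
        · exact swap_bound (handleC2 hS hme hleaf huw HIH hg hf hCe hRe hCu hRu)
        · exact handleC4 hS hme hleaf huw HIH hf hg hRe hCe hRu hCu
      · exact handleB hS hme hleaf huw HIH hf hg hRe hCe
      · exact swap_bound (handleB hS hme hleaf huw HIH hg hf hCe hRe)
      · exact finish_bound hS HIH hf hg (subset_refl _) (subset_refl _) hRe hCe

end Step


section Assemble

variable {V : Type*} [Fintype V] {G : SimpleGraph V}

lemma totalMatrix_eq [Fintype G.edgeSet] :
    totalMatrix G = NS G Finset.univ := by
  ext a b
  rcases a with v | e <;> rcases b with v' | e' <;> simp [totalMatrix, NS]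

lemma maxSubdet_le [Fintype G.edgeSet] (hG : G.IsAcyclic) :
    maxSubdet G ≤ PB G Finset.univ Set.univ := by
  apply csSup_le
  · refine ⟨1, 0, (fun x => x.elim0), (fun x => x.elim0),
      (fun x => x.elim0), (fun x => x.elim0), ?_⟩
    simp [Matrix.det_fin_zero]
  · rintro d ⟨k, f, g, hf, hg, rfl⟩
    have h := main_bound hG Finset.univ.card Finset.univ rfl (Fin k) f g hf hg
    rw [totalMatrix_eq]
    have h2 : (PB G Finset.univ (Set.range f ∩ Set.range g) : ℤ)
        ≤ (PB G Finset.univ Set.univ : ℤ) := by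
      exact_mod_cast PB_mono (subset_refl _) (Set.subset_univ _)
    have h3 := le_trans h h2
    rw [Int.abs_eq_natAbs] at h3
    exact_mod_cast h3

lemma degS_univ [Fintype G.edgeSet] [DecidableRel G.Adj] (v : V) :
    degS G Finset.univ v = G.degree v := by
  classical
  rw [← SimpleGraph.card_incidenceFinset_eq_degree]
  unfold degS
  refine Finset.card_bij (fun e _ => (e : Sym2 V)) ?_ ?_ ?_
  · intro e he
    rw [SimpleGraph.mem_incidenceFinset]
    exact ⟨e.2, (Finset.mem_filter.mp he).2⟩
  · intro a _ b _ hab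
    exact Subtype.ext hab
  · intro e' he'
    rw [SimpleGraph.mem_incidenceFinset] at he'
    exact ⟨⟨e', he'.1⟩, Finset.mem_filter.mpr ⟨Finset.mem_univ _, he'.2⟩, rfl⟩

lemma PB_univ_eq [Fintype G.edgeSet] [DecidableRel G.Adj] :
    PB G Finset.univ Set.univ
      = ∏ v ∈ Finset.univ.filter (fun v => 2 ≤ G.degree v), G.degree v := by
  unfold PB
  apply Finset.prod_congr
  · ext v
    simp [degS_univ]
  · intro v _
    exact degS_univ v

end Assemble

end Stmt16Aux

theorem stmt16 {V : Type*} [Fintype V] (G : SimpleGraph V) [DecidableRel G.Adj]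
    (hG : G.IsAcyclic)
    (hn2 : 1 ≤ (Finset.univ.filter fun v => 2 ≤ G.degree v).card) :
    (maxSubdet G : ℝ) ≤
      ((∑ v ∈ Finset.univ.filter (fun v => 2 ≤ G.degree v), (G.degree v : ℝ)) /
        ((Finset.univ.filter fun v => 2 ≤ G.degree v).card : ℝ)) ^
        (Finset.univ.filter fun v => 2 ≤ G.degree v).card := by
  classical
  open Stmt16Aux in
  haveI instE : Fintype G.edgeSet := Set.Finite.fintype (G.edgeSet.toFinite)
  set F := Finset.univ.filter (fun v => 2 ≤ G.degree v) with hF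
  set n := F.card with hn
  have hmax : maxSubdet G ≤ ∏ v ∈ F, G.degree v := by
    rw [← Stmt16Aux.PB_univ_eq]
    exact Stmt16Aux.maxSubdet_le hG
  have hmaxR : (maxSubdet G : ℝ) ≤ ∏ v ∈ F, (G.degree v : ℝ) := by
    exact_mod_cast hmax
  refine le_trans hmaxR ?_
  have hnpos : (0 : ℝ) < n := by
    have : 0 < n := hn2
    exact_mod_cast this
  set z : V → ℝ := fun v => (G.degree v : ℝ) with hz'
  have hz : ∀ v ∈ F, (0 : ℝ) ≤ z v := fun v _ => Nat.cast_nonneg _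
  have hw1 : ∑ _v ∈ F, (n : ℝ)⁻¹ = 1 := by
    rw [Finset.sum_const, nsmul_eq_mul, ← hn]
    field_simp
  have hgm := Real.geom_mean_le_arith_mean_weighted F (fun _ => (n : ℝ)⁻¹) z
    (fun _ _ => by positivity) hw1 hz
  have hsum : ∑ v ∈ F, (n : ℝ)⁻¹ * z v = (∑ v ∈ F, z v) / n := by
    rw [← Finset.mul_sum]
    ring
  have hprod : ∏ v ∈ F, z v = (∏ v ∈ F, z v ^ ((n : ℝ)⁻¹)) ^ (n : ℕ) := by
    rw [← Finset.prod_pow]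
    refine Finset.prod_congr rfl (fun v hv => ?_)
    rw [← Real.rpow_natCast (z v ^ ((n : ℝ)⁻¹)) n, ← Real.rpow_mul (hz v hv),
      inv_mul_cancel₀ (ne_of_gt hnpos), Real.rpow_one]
  rw [hprod]
  apply pow_le_pow_left₀ (Finset.prod_nonneg (fun v hv => Real.rpow_nonneg (hz v hv) _))
  rw [← hsum]
  exact hgm
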